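/- Let v_g^{(1)} = −α v_g^{(2)} with α > 0, v_g^{(2)} ≠ 0, κ11, κ22 ∈ ℝ, κ12 ∈ ℂ, κ12 ≠ 0. Then the set of Ω ∈ ℝ for which there exist K ∈ ℝ^d with det(diag(v_g^{(1)}·K, v_g^{(2)}·K) − [[κ11, κ12],[conj(κ12), κ22]] − Ω I) = 0 omits the open interval centered at −(κ22|v_g^{(1)}| + κ11|v_g^{(2)}|)/(|v_g^{(1)}| + |v_g^{(2)}|) with half-width 2|κ12| sqrt(|v_g^{(1)}||v_g^{(2)}|)/(|v_g^{(1)}| + |v_g^{(2)}|); i.e., there is a spectral gap of exactly this interval. -/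

import Mathlib

open RealInnerProductSpace

/-- Two-mode coupled mode matrix `L(K) = diag(v1·K, v2·K) - κ`,
`κ = [[κ11, κ12],[conj κ12, κ22]]`. -/
noncomputable def L2matK {d : ℕ} (v1 v2 : EuclideanSpace ℝ (Fin d)) (κ11 κ22 : ℝ)
    (κ12 : ℂ) (K : EuclideanSpace ℝ (Fin d)) : Matrix (Fin 2) (Fin 2) ℂ :=
  !![((⟪v1, K⟫ : ℝ) : ℂ) - (κ11 : ℂ), -κ12;
     -(starRingEnd ℂ) κ12, ((⟪v2, K⟫ : ℝ) : ℂ) - (κ22 : ℂ)]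

lemma key_quad (α a b c : ℝ) (hα : 0 < α) :
    (∃ t : ℝ, (-(α*t) - a) * (t - b) = c) ↔ 4*α*c ≤ (a + α*b)^2 := by
  constructor
  · rintro ⟨t, ht⟩; nlinarith [sq_nonneg (a - α*b + 2*α*t)]
  · intro h
    set s := Real.sqrt ((a+α*b)^2 - 4*α*c) with hsdef
    have hs : s^2 = (a+α*b)^2 - 4*α*c := Real.sq_sqrt (by linarith)
    refine ⟨((α*b - a) + s)/(2*α), ?_⟩
    have h2 : (2*α) ≠ 0 := by positivity
    field_simp
    nlinarith [hs]

/-- for anti-parallel group velocities `v1 = -α • v2` (`α > 0`) and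
`κ12 ≠ 0` the set of attained eigenvalues is exactly the complement of the open
interval centered at `-(κ22‖v1‖ + κ11‖v2‖)/(‖v1‖+‖v2‖)` with half-width
`2|κ12|√(‖v1‖‖v2‖)/(‖v1‖+‖v2‖)`: a spectral gap of exactly this interval. -/
theorem stmt3 (d : ℕ) (α : ℝ) (hα : 0 < α) (v2 : EuclideanSpace ℝ (Fin d))
    (hv2 : v2 ≠ 0) (v1 : EuclideanSpace ℝ (Fin d)) (hv1 : v1 = (-α) • v2)
    (κ11 κ22 : ℝ) (κ12 : ℂ) (hκ12 : κ12 ≠ 0) :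
    {Ω : ℝ | ∃ K : EuclideanSpace ℝ (Fin d),
        (L2matK v1 v2 κ11 κ22 κ12 K - (Ω : ℂ) • 1).det = 0}
      = (Set.Ioo
          (-((κ22 * ‖v1‖ + κ11 * ‖v2‖) / (‖v1‖ + ‖v2‖))
            - 2 * ‖κ12‖ * Real.sqrt (‖v1‖ * ‖v2‖) / (‖v1‖ + ‖v2‖))
          (-((κ22 * ‖v1‖ + κ11 * ‖v2‖) / (‖v1‖ + ‖v2‖))
            + 2 * ‖κ12‖ * Real.sqrt (‖v1‖ * ‖v2‖) / (‖v1‖ + ‖v2‖)))ᶜ := by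
  have hn : 0 < ‖v2‖ := norm_pos_iff.mpr hv2
  have hv1n : ‖v1‖ = α * ‖v2‖ := by
    rw [hv1, norm_smul]
    simp [abs_of_pos hα]
  have habs : 0 < ‖κ12‖ := norm_pos_iff.mpr hκ12
  have hsa : Real.sqrt (‖v1‖ * ‖v2‖) = Real.sqrt α * ‖v2‖ := by
    rw [hv1n, show α * ‖v2‖ * ‖v2‖ = α * ‖v2‖^2 by ring, Real.sqrt_mul hα.le,
      Real.sqrt_sq hn.le]
  set R : ℝ := 2 * ‖κ12‖ * Real.sqrt α with hR
  have hsqa : 0 < Real.sqrt α := Real.sqrt_pos.mpr hα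
  have hRpos : 0 < R := by positivity
  have hα1 : (0:ℝ) < α + 1 := by linarith
  have hne : α * ‖v2‖ + ‖v2‖ ≠ 0 := by positivity
  have hlo : -((κ22 * ‖v1‖ + κ11 * ‖v2‖) / (‖v1‖ + ‖v2‖))
      - 2 * ‖κ12‖ * Real.sqrt (‖v1‖ * ‖v2‖) / (‖v1‖ + ‖v2‖)
      = (-(κ22*α + κ11) - R)/(α+1) := by
    rw [hsa, hv1n, hR]
    field_simp
  have hhi : -((κ22 * ‖v1‖ + κ11 * ‖v2‖) / (‖v1‖ + ‖v2‖))
      + 2 * ‖κ12‖ * Real.sqrt (‖v1‖ * ‖v2‖) / (‖v1‖ + ‖v2‖)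
      = (-(κ22*α + κ11) + R)/(α+1) := by
    rw [hsa, hv1n, hR]
    field_simp
  ext Ω
  simp only [Set.mem_setOf_eq, Set.mem_compl_iff, Set.mem_Ioo, not_and, not_lt, hlo, hhi]
  have hdet : ∀ K : EuclideanSpace ℝ (Fin d),
      (L2matK v1 v2 κ11 κ22 κ12 K - (Ω : ℂ) • 1).det =
      ((((⟪v1, K⟫:ℝ) - κ11 - Ω) * ((⟪v2, K⟫:ℝ) - κ22 - Ω) - ‖κ12‖ ^ 2 : ℝ) : ℂ) := by
    intro K
    simp [L2matK, Matrix.det_fin_two, Matrix.sub_apply, Matrix.smul_apply, Matrix.one_apply,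
      Complex.mul_conj, Complex.normSq_eq_norm_sq]
  have step1 : (∃ K : EuclideanSpace ℝ (Fin d),
      (L2matK v1 v2 κ11 κ22 κ12 K - (Ω : ℂ) • 1).det = 0) ↔
      ∃ t : ℝ, (-(α*t) - (κ11+Ω)) * (t - (κ22+Ω)) = ‖κ12‖ ^ 2 := by
    constructor
    · rintro ⟨K, hK⟩
      rw [hdet K, Complex.ofReal_eq_zero, sub_eq_zero] at hK
      refine ⟨⟪v2, K⟫, ?_⟩
      have h1 : (⟪v1, K⟫ : ℝ) = -(α * ⟪v2, K⟫) := by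
        rw [hv1, real_inner_smul_left]; ring
      rw [← hK, h1]; ring
    · rintro ⟨t, ht⟩
      refine ⟨(t / ‖v2‖^2) • v2, ?_⟩
      rw [hdet, Complex.ofReal_eq_zero, sub_eq_zero]
      have h2 : (⟪v2, (t / ‖v2‖^2) • v2⟫ : ℝ) = t := by
        rw [real_inner_smul_right, real_inner_self_eq_norm_sq]
        field_simp
      have h1 : (⟪v1, (t / ‖v2‖^2) • v2⟫ : ℝ) = -(α*t) := by
        rw [hv1, real_inner_smul_left, h2]; ring
      rw [h1, h2, ← ht]; ring
  rw [step1, key_quad α (κ11+Ω) (κ22+Ω) _ hα, div_lt_iff₀ hα1, div_le_iff₀ hα1]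
  set E : ℝ := κ11 + Ω + α * (κ22 + Ω) with hE
  have hRsq : R^2 = 4*α*‖κ12‖^2 := by
    rw [hR, mul_pow, mul_pow, Real.sq_sqrt hα.le]; ring
  have hLHS : 4*α*‖κ12‖^2 ≤ (κ11+Ω + α*(κ22+Ω))^2 ↔ R^2 ≤ E^2 := by
    rw [hRsq, hE]
  rw [hLHS]
  constructor
  · intro h hlt
    have hRE : R ≤ |E| := by nlinarith [sq_abs E, abs_nonneg E]
    rcases le_abs'.mp hRE with h1 | h1
    · nlinarith
    · nlinarith
  · intro h
    by_cases hE' : -(κ22*α + κ11) - R < Ω * (α+1)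
    · have := h hE'; nlinarith
    · push_neg at hE'; nlinarith
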